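/- Let G be a linear subspace of K^n consisting of all vectors λ with Σ λ_i ℓ_i = 0, where ℓ₁,…,ℓ_n span the linear forms of S = K[∂₁,…,∂_d]. Let G act on R = K[x₁,…,x_n,y₁,…,y_n] by x_i ↦ x_i, y_i ↦ y_i + λ_i x_i. Then for each (r,u) ∈ ℕ^{n+1} the graded component R^G_{(r,u)} of the invariant ring is isomorphic as a K-vector space to the space of homogeneous polynomials of degree r in K[z₁,…,z_d] annihilated by ℓ_i^{u_i+1} (as differential operators) for all i. -/

import Mathlib

open MvPolynomial

section AuxLemmas

variable {K : Type*} [Field K]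

/-! ### Generic weighted-homogeneity lemmas -/

lemma aux_pow_whomog {σ M : Type*} [AddCommMonoid M] {w : σ → M} {p : MvPolynomial σ K} {m : M}
    (hp : p.IsWeightedHomogeneous w m) (k : ℕ) : (p ^ k).IsWeightedHomogeneous w (k • m) := by
  induction k with
  | zero => simpa using isWeightedHomogeneous_one K w
  | succ k ih => rw [pow_succ, succ_nsmul]; exact ih.mul hp

lemma aux_aeval_whomog {σ τ M : Type*} [AddCommMonoid M]
    (w1 : σ → M) (w2 : τ → M) (g : σ → MvPolynomial τ K)
    (hg : ∀ v, (g v).IsWeightedHomogeneous w2 (w1 v))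
    {p : MvPolynomial σ K} {m : M} (hp : p.IsWeightedHomogeneous w1 m) :
    (aeval g p).IsWeightedHomogeneous w2 m := by
  have hsum : aeval g p = ∑ d ∈ p.support, aeval g (monomial d (coeff d p)) := by
    rw [← map_sum, support_sum_monomial_coeff]
  rw [hsum]
  apply IsWeightedHomogeneous.sum
  intro d hd
  rw [aeval_monomial]
  have h1 : IsWeightedHomogeneous w2 ((algebraMap K (MvPolynomial τ K)) (coeff d p)) 0 :=
    isWeightedHomogeneous_C _ _
  have h2 : IsWeightedHomogeneous w2 (d.prod fun v k => g v ^ k) (Finsupp.weight w1 d) := by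
    rw [Finsupp.prod, Finsupp.weight_apply, Finsupp.sum]
    exact IsWeightedHomogeneous.prod _ _ _ (fun v _ => aux_pow_whomog (hg v) (d v))
  have h3 := h1.mul h2
  rw [zero_add] at h3
  rwa [hp (mem_support_iff.mp hd)] at h3

/-! ### Iterated partial derivatives and supports -/

lemma aux_coeff_pderiv {σ : Type*} [DecidableEq σ] (j : σ) (p : MvPolynomial σ K) (b : σ →₀ ℕ) :
    coeff b (pderiv j p) = (b j + 1 : ℕ) * coeff (b + Finsupp.single j 1) p := by
  induction p using MvPolynomial.induction_on' with
  | monomial s a =>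
    rw [pderiv_monomial, coeff_monomial, coeff_monomial]
    by_cases h : s = b + Finsupp.single j 1
    · subst h
      have h1 : b + Finsupp.single j 1 - Finsupp.single j 1 = b := add_tsub_cancel_right _ _
      have h2 : (b + Finsupp.single j 1 : σ →₀ ℕ) j = b j + 1 := by
        rw [Finsupp.add_apply, Finsupp.single_eq_same]
      rw [if_pos h1, if_pos rfl, h2]
      push_cast; ring
    · rw [if_neg h]
      split_ifs with h2
      · have hsj : s j = 0 := by
          by_contra hs
          apply h
          have h3 : s - Finsupp.single j 1 + Finsupp.single j 1 = s := by
            ext k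
            rcases eq_or_ne j k with rfl | hk
            · rw [Finsupp.add_apply, Finsupp.tsub_apply, Finsupp.single_eq_same]; omega
            · rw [Finsupp.add_apply, Finsupp.tsub_apply, Finsupp.single_eq_of_ne (Ne.symm hk)]; omega
          rw [← h3, h2]
        simp [hsj]
      · simp
  | add p q hp hq => simp [hp, hq, mul_add]

lemma aux_iter_pderiv_zero_iff [CharZero K] {σ : Type*} [DecidableEq σ] (j : σ) (m : ℕ)
    (p : MvPolynomial σ K) :
    ((pderiv j).toLinearMap ^ m) p = 0 ↔ ∀ b ∈ p.support, b j < m := by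
  induction m generalizing p with
  | zero =>
    simp only [pow_zero, Module.End.one_apply, Nat.not_lt_zero]
    constructor
    · rintro rfl b hb; simp at hb
    · intro h; by_contra hp
      obtain ⟨b, hb⟩ := exists_coeff_ne_zero hp
      exact h b (mem_support_iff.mpr hb)
  | succ m ih =>
    rw [pow_succ, Module.End.mul_apply]
    have hDp : (pderiv j).toLinearMap p = pderiv j p := rfl
    rw [hDp, ih]
    constructor
    · intro h c hc
      rcases Nat.eq_zero_or_pos (c j) with h0 | h0
      · omega
      · have hceq : c - Finsupp.single j 1 + Finsupp.single j 1 = c := by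
          ext k
          rcases eq_or_ne j k with rfl | hk
          · rw [Finsupp.add_apply, Finsupp.tsub_apply, Finsupp.single_eq_same]; omega
          · rw [Finsupp.add_apply, Finsupp.tsub_apply, Finsupp.single_eq_of_ne (Ne.symm hk)]; omega
        have hco : coeff (c - Finsupp.single j 1) (pderiv j p) ≠ 0 := by
          rw [aux_coeff_pderiv, hceq]
          have : coeff c p ≠ 0 := mem_support_iff.mp hc
          intro hz
          rcases mul_eq_zero.mp hz with h1 | h1
          · exact Nat.cast_ne_zero.mpr (Nat.succ_ne_zero _) h1
          · exact this h1
        have hlt := h _ (mem_support_iff.mpr hco)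
        rw [Finsupp.tsub_apply, Finsupp.single_eq_same] at hlt
        omega
    · intro h b hb
      have hco := mem_support_iff.mp hb
      rw [aux_coeff_pderiv] at hco
      have : coeff (b + Finsupp.single j 1) p ≠ 0 := by
        intro hz; rw [hz, mul_zero] at hco; exact hco rfl
      have hlt := h _ (mem_support_iff.mpr this)
      rw [Finsupp.add_apply, Finsupp.single_eq_same] at hlt
      omega

end AuxLemmas

section More
variable {K : Type*} [Field K]
lemma aux_pderiv_g (d n : ℕ) (A : Matrix (Fin d) (Fin n) K) (j : Fin n) (i0 : Fin d) :
    pderiv j (∑ k, C (A i0 k) * X k : MvPolynomial (Fin n) K) = C (A i0 j) := by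
  rw [map_sum]
  rw [Finset.sum_eq_single j]
  · rw [pderiv_C_mul, pderiv_X_self, mul_one]
  · intro k _ hk
    rw [pderiv_C_mul, pderiv_X_of_ne hk, mul_zero]
  · intro h; exact absurd (Finset.mem_univ j) h

lemma aux_pderiv_comm (d n : ℕ) (A : Matrix (Fin d) (Fin n) K) (j : Fin n)
    (p : MvPolynomial (Fin d) K) :
    pderiv j (aeval (fun i => ∑ k, C (A i k) * X k : Fin d → MvPolynomial (Fin n) K) p)
      = aeval (fun i => ∑ k, C (A i k) * X k : Fin d → MvPolynomial (Fin n) K)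
          (∑ i, A i j • pderiv i p) := by
  induction p using MvPolynomial.induction_on with
  | C a => simp
  | add p q hp hq =>
    simp only [map_add, smul_add, Finset.sum_add_distrib, hp, hq]
  | mul_X p i0 hp =>
    have hR : (∑ i, A i j • pderiv i (p * X i0)) =
        (∑ i, A i j • pderiv i p) * X i0 + A i0 j • p := by
      have : ∀ i : Fin d, A i j • pderiv i (p * X i0)
          = (A i j • pderiv i p) * X i0 + A i j • (p * pderiv i (X i0)) := by
        intro i
        rw [pderiv_mul, smul_add, smul_mul_assoc]
      rw [Finset.sum_congr rfl fun i _ => this i, Finset.sum_add_distrib,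
        ← Finset.sum_mul]
      congr 1
      rw [Finset.sum_eq_single i0]
      · rw [pderiv_X_self, mul_one]
      · intro k _ hk
        rw [pderiv_X_of_ne (Ne.symm hk)]
        · simp
      · intro h; exact absurd (Finset.mem_univ i0) h
    have key : aeval (fun i => ∑ k, C (A i k) * X k : Fin d → MvPolynomial (Fin n) K)
          (∑ i, A i j • pderiv i (p * X i0))
        = aeval (fun i => ∑ k, C (A i k) * X k : Fin d → MvPolynomial (Fin n) K)
            (∑ i, A i j • pderiv i p)
          * aeval (fun i => ∑ k, C (A i k) * X k : Fin d → MvPolynomial (Fin n) K)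
              (X i0 : MvPolynomial (Fin d) K)
          + C (A i0 j) * aeval (fun i => ∑ k, C (A i k) * X k : Fin d → MvPolynomial (Fin n) K) p := by
      rw [hR, map_add, map_mul]
      congr 1
      have hs : (aeval (fun i => ∑ k, C (A i k) * X k : Fin d → MvPolynomial (Fin n) K))
          (A i0 j • p) = A i0 j • (aeval (fun i => ∑ k, C (A i k) * X k :
            Fin d → MvPolynomial (Fin n) K)) p := map_smul _ _ _
      rw [hs, smul_eq_C_mul]
    rw [key, map_mul, pderiv_mul, hp]
    have hgi : pderiv j (aeval (fun i => ∑ k, C (A i k) * X k : Fin d → MvPolynomial (Fin n) K)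
          (X i0 : MvPolynomial (Fin d) K))
        = C (A i0 j) := by
      rw [aeval_X]; exact aux_pderiv_g d n A j i0
    rw [hgi]
    ring

lemma aux_weight_formula (n : ℕ) (m : Fin n ⊕ Fin n →₀ ℕ) :
    Finsupp.weight (Sum.elim (fun i => ((0 : ℕ), Pi.single i 1))
        (fun i => ((1 : ℕ), Pi.single i 1)) : Fin n ⊕ Fin n → ℕ × (Fin n → ℕ)) m
      = ((∑ i, m (Sum.inr i)), fun k => m (Sum.inl k) + m (Sum.inr k)) := by
  rw [Finsupp.weight_apply, Finsupp.sum_fintype _ _ (fun v => by simp)]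
  rw [Fintype.sum_sum_type]
  apply Prod.ext
  · rw [Prod.fst_add, Prod.fst_sum, Prod.fst_sum]
    simp
  · rw [Prod.snd_add, Prod.snd_sum, Prod.snd_sum]
    have h1 : ∀ i : Fin n, m (Sum.inl i) • (((0:ℕ), Pi.single i 1) : ℕ × (Fin n → ℕ)).2
        = Pi.single i (m (Sum.inl i)) := by
      intro i; funext k
      simp [Pi.single_apply, Pi.smul_apply]
    have h2 : ∀ i : Fin n, m (Sum.inr i) • (((1:ℕ), Pi.single i 1) : ℕ × (Fin n → ℕ)).2
        = Pi.single i (m (Sum.inr i)) := by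
      intro i; funext k
      simp [Pi.single_apply, Pi.smul_apply]
    simp only [Sum.elim_inl, Sum.elim_inr, Prod.smul_snd] at *
    rw [Finset.sum_congr rfl (fun i _ => h1 i), Finset.sum_congr rfl (fun i _ => h2 i),
      Finset.univ_sum_single, Finset.univ_sum_single]
    rfl

lemma aux_weight_one (n : ℕ) (b : Fin n →₀ ℕ) :
    Finsupp.weight (1 : Fin n → ℕ) b = ∑ i, b i := by
  rw [Finsupp.weight_apply, Finsupp.sum_fintype _ _ (fun v => by simp)]
  simp

end More

section ALemmas

variable {K : Type*} [Field K] {d n : ℕ}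

noncomputable def sigA' (A : Matrix (Fin d) (Fin n) K) :
    MvPolynomial (Fin d) K →ₐ[K] MvPolynomial (Fin n) K :=
  aeval fun i => ∑ k, C (A i k) * X k

noncomputable def tauB' (B : (Fin d → K) →ₗ[K] (Fin n → K)) :
    MvPolynomial (Fin n) K →ₐ[K] MvPolynomial (Fin d) K :=
  aeval fun j => ∑ i, C (B (Pi.single i 1) j) * X i

noncomputable def evm' : MvPolynomial (Fin n ⊕ Fin n) K →ₐ[K] MvPolynomial (Fin n) K :=
  aeval (Sum.elim (fun _ => (1 : MvPolynomial (Fin n) K)) X)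

lemma aux_tau_sigma (A : Matrix (Fin d) (Fin n) K) (B : (Fin d → K) →ₗ[K] (Fin n → K))
    (hAB : ∀ v : Fin d → K, Matrix.mulVecLin A (B v) = v) (f : MvPolynomial (Fin d) K) :
    tauB' B (sigA' A f) = f := by
  have hcomp : (tauB' B).comp (sigA' A) = AlgHom.id K (MvPolynomial (Fin d) K) := by
    apply MvPolynomial.algHom_ext
    intro i
    rw [AlgHom.comp_apply, AlgHom.id_apply, sigA', aeval_X, map_sum]
    have hterm : ∀ k : Fin n, tauB' B (C (A i k) * X k)
        = ∑ i' : Fin d, C (A i k * B (Pi.single i' 1) k) * X i' := by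
      intro k
      rw [map_mul, tauB', aeval_C, aeval_X, MvPolynomial.algebraMap_eq, Finset.mul_sum]
      apply Finset.sum_congr rfl
      intro i' _
      rw [← mul_assoc, ← map_mul]
    rw [Finset.sum_congr rfl fun k _ => hterm k, Finset.sum_comm]
    have hinner : ∀ i' : Fin d, (∑ k : Fin n, (C (A i k * B (Pi.single i' 1) k) :
            MvPolynomial (Fin d) K)
          * (X i' : MvPolynomial (Fin d) K))
        = (C ((Pi.single i' (1:K) : Fin d → K) i) : MvPolynomial (Fin d) K)
          * (X i' : MvPolynomial (Fin d) K) := by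
      intro i'
      rw [← Finset.sum_mul, ← map_sum]
      congr 2
      have h := congrFun (hAB (Pi.single i' 1)) i
      rw [Matrix.mulVecLin_apply] at h
      rw [← h]
      simp [Matrix.mulVec, dotProduct]
    rw [Finset.sum_congr rfl fun i' _ => hinner i']
    rw [Finset.sum_eq_single i]
    · rw [Pi.single_eq_same, map_one, one_mul]
    · intro i' _ hne
      rw [Pi.single_eq_of_ne (Ne.symm hne), map_zero, zero_mul]
    · intro h; exact absurd (Finset.mem_univ i) h
  calc tauB' B (sigA' A f) = ((tauB' B).comp (sigA' A)) f := rfl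
  _ = f := by rw [hcomp]; rfl

lemma aux_translate_sigma (A : Matrix (Fin d) (Fin n) K) (lam : Fin n → K)
    (hlam : ∀ i, ∑ j, A i j * lam j = 0) (f : MvPolynomial (Fin d) K) :
    aeval (fun j => X j + C (lam j)) (sigA' A f) = sigA' A f := by
  have hcomp : ((aeval (fun j => X j + C (lam j)) :
      MvPolynomial (Fin n) K →ₐ[K] MvPolynomial (Fin n) K)).comp (sigA' A) = sigA' A := by
    apply MvPolynomial.algHom_ext
    intro i
    rw [AlgHom.comp_apply, sigA', aeval_X, map_sum]
    have hterm : ∀ k : Fin n, (aeval (fun j => X j + C (lam j)) :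
        MvPolynomial (Fin n) K →ₐ[K] MvPolynomial (Fin n) K) (C (A i k) * X k)
        = C (A i k) * X k + C (A i k * lam k) := by
      intro k
      rw [map_mul, aeval_C, aeval_X, MvPolynomial.algebraMap_eq, mul_add, ← map_mul]
    rw [Finset.sum_congr rfl fun k _ => hterm k, Finset.sum_add_distrib, ← map_sum, hlam i,
      map_zero, add_zero]
  calc (aeval (fun j => X j + C (lam j)) :
      MvPolynomial (Fin n) K →ₐ[K] MvPolynomial (Fin n) K) (sigA' A f)
      = (((aeval (fun j => X j + C (lam j)) :
        MvPolynomial (Fin n) K →ₐ[K] MvPolynomial (Fin n) K)).comp (sigA' A)) f := rfl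
  _ = sigA' A f := by rw [hcomp]

lemma aux_evm_phi (lam : Fin n → K) :
    (evm' (K := K) (n := n)).comp (aeval (Sum.elim (fun i => X (Sum.inl i))
        (fun i => X (Sum.inr i) + C (lam i) * X (Sum.inl i))))
      = ((aeval (fun j => X j + C (lam j)) :
          MvPolynomial (Fin n) K →ₐ[K] MvPolynomial (Fin n) K)).comp (evm' (K := K)) := by
  apply MvPolynomial.algHom_ext
  intro v
  rcases v with i | i
  · simp only [AlgHom.comp_apply, aeval_X, Sum.elim_inl, evm', map_one]
  · simp only [AlgHom.comp_apply, aeval_X, Sum.elim_inr, Sum.elim_inl, evm', map_add, map_mul,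
      aeval_C, MvPolynomial.algebraMap_eq, mul_one]

lemma aux_sigma_iter (A : Matrix (Fin d) (Fin n) K) (j : Fin n) (m : ℕ)
    (f : MvPolynomial (Fin d) K) :
    sigA' A (((∑ i, A i j • (pderiv i).toLinearMap :
        Module.End K (MvPolynomial (Fin d) K)) ^ m) f)
      = (((pderiv j).toLinearMap : Module.End K (MvPolynomial (Fin n) K)) ^ m) (sigA' A f) := by
  induction m generalizing f with
  | zero => simp
  | succ m ih =>
    rw [pow_succ', Module.End.mul_apply, pow_succ', Module.End.mul_apply]
    have hE : ((∑ i, A i j • (pderiv i).toLinearMap :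
        Module.End K (MvPolynomial (Fin d) K))) f = ∑ i, A i j • pderiv i f := by
      rw [LinearMap.sum_apply]
      apply Finset.sum_congr rfl
      intro i _
      rw [LinearMap.smul_apply]
      rfl
    have hstep : ∀ g : MvPolynomial (Fin d) K, sigA' A ((∑ i, A i j • (pderiv i).toLinearMap :
        Module.End K (MvPolynomial (Fin d) K)) g) = pderiv j (sigA' A g) := by
      intro g
      have hEg : ((∑ i, A i j • (pderiv i).toLinearMap :
          Module.End K (MvPolynomial (Fin d) K))) g = ∑ i, A i j • pderiv i g := by
        rw [LinearMap.sum_apply]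
        apply Finset.sum_congr rfl
        intro i _
        rw [LinearMap.smul_apply]
        rfl
      rw [hEg]
      exact (aux_pderiv_comm d n A j g).symm
    rw [hstep, ih]
    rfl
end ALemmas


section Sec2
section Defs

variable (K : Type*) [Field K]

/-- exponent re-homogenization `b ↦ (u − b, b)`. -/
noncomputable def embu {n : ℕ} (u : Fin n → ℕ) (b : Fin n →₀ ℕ) : Fin n ⊕ Fin n →₀ ℕ :=
  Finsupp.sumElim (Finsupp.equivFunOnFinite.symm u - b) b

/-- the linear rehomogenization map `w^b ↦ x^{u-b} y^b`. -/
noncomputable def smap (n : ℕ) (u : Fin n → ℕ) :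
    MvPolynomial (Fin n) K →ₗ[K] MvPolynomial (Fin n ⊕ Fin n) K :=
  AddMonoidAlgebra.mapDomainLinearMap K K (embu u)

/-- restriction of an exponent on `Fin n ⊕ Fin n` to the `y`-part. -/
noncomputable def restr (n : ℕ) (m : Fin n ⊕ Fin n →₀ ℕ) : Fin n →₀ ℕ :=
  Finsupp.equivFunOnFinite.symm fun i => m (Sum.inr i)

end Defs

section DefLemmas

variable {K : Type*} [Field K]

lemma smap_monomial {n : ℕ} (u : Fin n → ℕ) (b : Fin n →₀ ℕ) (c : K) :
    smap K n u (monomial b c) = monomial (embu u b) c := by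
  rw [← single_eq_monomial, ← single_eq_monomial]
  exact AddMonoidAlgebra.mapDomainLinearMap_single _ _ _

lemma evm_monomial {n : ℕ} (m : Fin n ⊕ Fin n →₀ ℕ) (c : K) :
    evm' (K := K) (n := n) (monomial m c) = monomial (restr n m) c := by
  rw [evm', aeval_monomial, monomial_eq, MvPolynomial.algebraMap_eq]
  congr 1
  rw [Finsupp.prod_fintype _ _ (fun v => pow_zero _), Finsupp.prod_fintype _ _ (fun v => pow_zero _)]
  rw [Fintype.prod_sum_type]
  simp only [Sum.elim_inl, Sum.elim_inr, one_pow, Finset.prod_const_one, one_mul]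
  apply Finset.prod_congr rfl
  intro i _
  congr 1

lemma embu_apply_inl {n : ℕ} (u : Fin n → ℕ) (b : Fin n →₀ ℕ) (i : Fin n) :
    embu u b (Sum.inl i) = u i - b i := by
  rw [embu, Finsupp.sumElim_inl, Finsupp.tsub_apply]
  rfl

lemma embu_apply_inr {n : ℕ} (u : Fin n → ℕ) (b : Fin n →₀ ℕ) (i : Fin n) :
    embu u b (Sum.inr i) = b i := by
  rw [embu, Finsupp.sumElim_inr]

lemma restr_embu {n : ℕ} (u : Fin n → ℕ) (b : Fin n →₀ ℕ) : restr n (embu u b) = b := by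
  ext i
  rw [restr]
  rw [Finsupp.coe_equivFunOnFinite_symm]
  exact embu_apply_inr u b i

lemma evm_smap {n : ℕ} (u : Fin n → ℕ) (p : MvPolynomial (Fin n) K) :
    evm' (K := K) (n := n) (smap K n u p) = p := by
  induction p using MvPolynomial.induction_on' with
  | monomial s a => rw [smap_monomial, evm_monomial, restr_embu]
  | add p q hp hq => rw [map_add, map_add, hp, hq]

lemma smap_evm {n : ℕ} (u : Fin n → ℕ) (p : MvPolynomial (Fin n ⊕ Fin n) K)
    (hp : ∀ m ∈ p.support, ∀ i : Fin n, m (Sum.inl i) + m (Sum.inr i) = u i) :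
    smap K n u (evm' (K := K) (n := n) p) = p := by
  conv_rhs => rw [← support_sum_monomial_coeff p]
  conv_lhs => rw [← support_sum_monomial_coeff p, map_sum, map_sum]
  apply Finset.sum_congr rfl
  intro m hm
  rw [evm_monomial, smap_monomial]
  have hemb : embu u (restr n m) = m := by
    apply Finsupp.ext
    intro v
    rcases v with i | i
    · rw [embu_apply_inl]
      have hr : (restr n m) i = m (Sum.inr i) := by
        rw [restr, Finsupp.coe_equivFunOnFinite_symm]
      rw [hr]
      have := hp m hm i
      omega
    · rw [embu_apply_inr]
      rw [restr, Finsupp.coe_equivFunOnFinite_symm]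
  rw [hemb]

lemma aux_eval_aeval {σ τ : Type*} [Fintype σ] (g : σ → MvPolynomial τ K) (w : τ → K)
    (p : MvPolynomial σ K) :
    eval w (aeval g p) = eval (fun v => eval w (g v)) p := by
  have h1 : ((aeval w : MvPolynomial τ K →ₐ[K] K).comp (aeval g)) p
      = aeval (fun v => aeval w (g v)) p := by
    rw [comp_aeval]
  have h2 : ∀ (q : MvPolynomial τ K) (x : τ → K), aeval x q = eval x q := by
    intro q x
    rw [← coe_aeval_eq_eval]; rfl
  have h3 : ∀ (q : MvPolynomial σ K) (x : σ → K), aeval x q = eval x q := by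
    intro q x
    rw [← coe_aeval_eq_eval]; rfl
  rw [AlgHom.comp_apply, h2, h3] at h1
  rw [h1]
  have h4 : (fun v => (aeval w : MvPolynomial τ K →ₐ[K] K) (g v)) = fun v => eval w (g v) :=
    funext fun v => h2 (g v) w
  rw [h4]

end DefLemmas

end Sec2
section Final

variable {K : Type*} [Field K] {d n : ℕ}

lemma aux_weight2_formula (m : Fin n ⊕ Fin n →₀ ℕ) :
    Finsupp.weight (Sum.elim (fun i => Pi.single i 1) (fun i => Pi.single i 1) :
        Fin n ⊕ Fin n → Fin n → ℕ) m
      = fun k => m (Sum.inl k) + m (Sum.inr k) := by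
  rw [Finsupp.weight_apply, Finsupp.sum_fintype _ _ (fun v => by simp)]
  rw [Fintype.sum_sum_type]
  have h1 : ∀ i : Fin n, m (Sum.inl i) • (Pi.single i 1 : Fin n → ℕ)
      = Pi.single i (m (Sum.inl i)) := by
    intro i; funext k
    simp [Pi.single_apply, Pi.smul_apply]
  have h2 : ∀ i : Fin n, m (Sum.inr i) • (Pi.single i 1 : Fin n → ℕ)
      = Pi.single i (m (Sum.inr i)) := by
    intro i; funext k
    simp [Pi.single_apply, Pi.smul_apply]
  simp only [Sum.elim_inl, Sum.elim_inr]
  rw [Finset.sum_congr rfl (fun i _ => h1 i), Finset.sum_congr rfl (fun i _ => h2 i),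
    Finset.univ_sum_single, Finset.univ_sum_single]
  rfl

lemma aux_sigma_tau [CharZero K] (A : Matrix (Fin d) (Fin n) K)
    (B : (Fin d → K) →ₗ[K] (Fin n → K))
    (hAB : ∀ v : Fin d → K, Matrix.mulVecLin A (B v) = v) (p : MvPolynomial (Fin n) K)
    (hinv : ∀ lam : Fin n → K, (∀ i, ∑ j, A i j * lam j = 0) →
      aeval (fun j => X j + C (lam j)) p = p) :
    sigA' A (tauB' B p) = p := by
  apply MvPolynomial.funext
  intro w
  have e1 : eval w (sigA' A (tauB' B p)) = eval (fun i => ∑ k, A i k * w k) (tauB' B p) := by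
    rw [sigA', aux_eval_aeval]
    have hfun : (fun i => eval w (∑ k, C (A i k) * X k)) = fun i => ∑ k, A i k * w k := by
      funext i; simp
    rw [hfun]
  set v : Fin d → K := fun i => ∑ k, A i k * w k with hv
  have e2 : eval v (tauB' B p) = eval (B v) p := by
    rw [tauB', aux_eval_aeval]
    have hfun : (fun j => eval v (∑ i, C (B (Pi.single i 1) j) * X i)) = B v := by
      funext j
      simp only [map_sum, eval_mul, eval_C, eval_X]
      have hv2 : v = ∑ i, v i • (Pi.single i 1 : Fin d → K) := by
        have h := Finset.univ_sum_single v
        rw [← h]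
        apply Finset.sum_congr rfl
        intro i _
        funext k
        simp [Pi.single_apply, Pi.smul_apply, mul_comm]
      conv_rhs => rw [hv2, map_sum, Finset.sum_apply]
      apply Finset.sum_congr rfl
      intro i _
      rw [map_smul]
      simp [mul_comm]
    rw [hfun]
  have hmv : ∀ y : Fin n → K, ∀ i, Matrix.mulVec A y i = ∑ k, A i k * y k := by
    intro y i
    simp [Matrix.mulVec, dotProduct]
  have hlam : ∀ i, ∑ j', A i j' * (B v j' - w j') = 0 := by
    intro i
    have h := congrFun (hAB v) i
    rw [Matrix.mulVecLin_apply, hmv (B v) i] at h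
    have hsplit : ∑ j', A i j' * (B v j' - w j') =
        (∑ j', A i j' * B v j') - ∑ j', A i j' * w j' := by
      rw [← Finset.sum_sub_distrib]
      apply Finset.sum_congr rfl
      intro j' _; ring
    rw [hsplit, h]
    have : ∑ j', A i j' * w j' = v i := rfl
    rw [this, sub_self]
  have htr := hinv (fun j' => B v j' - w j') hlam
  have e3 : eval w (aeval (fun j => (X j : MvPolynomial (Fin n) K) + C (B v j - w j)) p)
      = eval (B v) p := by
    rw [aux_eval_aeval]
    have hfun : (fun j => eval w ((X j : MvPolynomial (Fin n) K) + C (B v j - w j))) = B v := by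
      funext j; simp
    rw [hfun]
  rw [e1, e2, ← e3, htr]

end Final
section Reprs

variable {K : Type*} [Field K] {d n : ℕ}

lemma smap_repr (u : Fin n → ℕ) (q : MvPolynomial (Fin n) K) :
    smap K n u q = ∑ b ∈ q.support, monomial (embu u b) (coeff b q) := by
  conv_lhs => rw [← support_sum_monomial_coeff q]
  rw [map_sum]
  exact Finset.sum_congr rfl fun b _ => smap_monomial u b _

lemma evm_repr (F : MvPolynomial (Fin n ⊕ Fin n) K) :
    evm' (K := K) (n := n) F = ∑ m ∈ F.support, monomial (restr n m) (coeff m F) := by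
  conv_lhs => rw [← support_sum_monomial_coeff F]
  rw [map_sum]
  exact Finset.sum_congr rfl fun m _ => evm_monomial m _

lemma aux_lin_whomog {τ : Type*} [Fintype τ] (c : τ → K) :
    (∑ k, C (c k) * X k : MvPolynomial τ K).IsWeightedHomogeneous (1 : τ → ℕ) 1 := by
  apply IsWeightedHomogeneous.sum
  intro k _
  have h := (isWeightedHomogeneous_C ((1 : τ → ℕ)) (c k)).mul (isWeightedHomogeneous_X K _ k)
  rw [zero_add] at h
  simpa using h

end Reprs

/-- The `(r,u)`-graded component of the invariant ring of the Nagata action of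
`G = {λ : Σ λᵢ ℓᵢ = 0}` on `K[x₁,…,x_n,y₁,…,y_n]` is isomorphic as a `K`-vector space to the
space of degree-`r` homogeneous polynomials annihilated by each `ℓᵢ^{uᵢ+1}` acting as a
constant-coefficient differential operator. -/
theorem stmt2 (K : Type*) [Field K] [CharZero K] (d n : ℕ)
    (A : Matrix (Fin d) (Fin n) K)
    (hspan : Submodule.span K (Set.range fun j => (fun i => A i j)) = (⊤ : Submodule K (Fin d → K)))
    (r : ℕ) (u : Fin n → ℕ)
    -- the differential operators ℓⱼ = Σᵢ a_{ij} ∂ᵢ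
    (D : Fin n → Module.End K (MvPolynomial (Fin d) K))
    (hD : ∀ j, D j = ∑ i : Fin d, A i j • (MvPolynomial.pderiv i).toLinearMap)
    -- the Nagata action of λ ∈ K^n : xᵢ ↦ xᵢ, yᵢ ↦ yᵢ + λᵢ xᵢ
    (φ : (Fin n → K) → (MvPolynomial (Fin n ⊕ Fin n) K →ₐ[K] MvPolynomial (Fin n ⊕ Fin n) K))
    (hφ : ∀ lam, φ lam = MvPolynomial.aeval
      (Sum.elim (fun i => MvPolynomial.X (Sum.inl i))
        (fun i => MvPolynomial.X (Sum.inr i) + MvPolynomial.C (lam i) * MvPolynomial.X (Sum.inl i))))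
    -- the ℤ^{n+1}-grading: deg xᵢ = eᵢ, deg yᵢ = e₀ + eᵢ
    (wt : Fin n ⊕ Fin n → ℕ × (Fin n → ℕ))
    (hwt : wt = Sum.elim (fun i => ((0 : ℕ), Pi.single i 1)) (fun i => ((1 : ℕ), Pi.single i 1))) :
    Nonempty (
      -- degree-r polynomial solutions of the PDE system
      ↥((MvPolynomial.homogeneousSubmodule (Fin d) K r) ⊓
          ⨅ j : Fin n, LinearMap.ker ((D j) ^ (u j + 1)))
      ≃ₗ[K]
      -- the (r,u)-component of the invariant ring R^G
      ↥((MvPolynomial.weightedHomogeneousSubmodule K wt (r, u)) ⊓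
          ⨅ lam : {lam : Fin n → K // ∀ i : Fin d, ∑ j : Fin n, A i j * lam j = 0},
            LinearMap.eqLocus (φ lam.1).toLinearMap LinearMap.id)) := by
  classical
  have hφ' : φ = fun lam => aeval (Sum.elim (fun i => X (Sum.inl i))
      (fun i => X (Sum.inr i) + C (lam i) * X (Sum.inl i))) := funext hφ
  have hD' : D = fun j => ∑ i, A i j • (pderiv i).toLinearMap := funext hD
  subst hφ' hD' hwt
  -- a right inverse B of A
  have hsurj : LinearMap.range (Matrix.mulVecLin A) = ⊤ := by
    rw [Matrix.range_mulVecLin]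
    have htr : Set.range A.col = Set.range fun j => fun i => A i j := rfl
    rw [htr, hspan]
  obtain ⟨B, hB⟩ := LinearMap.exists_rightInverse_of_surjective (Matrix.mulVecLin A) hsurj
  have hAB : ∀ v : Fin d → K, Matrix.mulVecLin A (B v) = v := by
    intro v
    have h := LinearMap.congr_fun hB v
    simpa using h
  -- membership characterizations
  have hmemL : ∀ f : MvPolynomial (Fin d) K,
      (f ∈ (MvPolynomial.homogeneousSubmodule (Fin d) K r) ⊓
          ⨅ j : Fin n, LinearMap.ker ((((fun j => ∑ i, A i j • (pderiv i).toLinearMap) :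
            Fin n → Module.End K (MvPolynomial (Fin d) K)) j) ^ (u j + 1)))
      ↔ (f.IsHomogeneous r ∧ ∀ j : Fin n, (((∑ i, A i j • (pderiv i).toLinearMap) :
          Module.End K (MvPolynomial (Fin d) K)) ^ (u j + 1)) f = 0) := by
    intro f
    simp only [Submodule.mem_inf, mem_homogeneousSubmodule, Submodule.mem_iInf,
      LinearMap.mem_ker]
  have hmemR : ∀ F : MvPolynomial (Fin n ⊕ Fin n) K,
      (F ∈ (MvPolynomial.weightedHomogeneousSubmodule K
            (Sum.elim (fun i => ((0 : ℕ), Pi.single i 1)) (fun i => ((1 : ℕ), Pi.single i 1)))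
            (r, u)) ⊓
          ⨅ lam : {lam : Fin n → K // ∀ i : Fin d, ∑ j : Fin n, A i j * lam j = 0},
            LinearMap.eqLocus (((fun lam => aeval (Sum.elim (fun i => X (Sum.inl i))
              (fun i => X (Sum.inr i) + C (lam i) * X (Sum.inl i)))) :
                (Fin n → K) → (MvPolynomial (Fin n ⊕ Fin n) K →ₐ[K]
                  MvPolynomial (Fin n ⊕ Fin n) K)) lam.1).toLinearMap LinearMap.id)
      ↔ (F.IsWeightedHomogeneous
            (Sum.elim (fun i => ((0 : ℕ), Pi.single i 1)) (fun i => ((1 : ℕ), Pi.single i 1)))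
            (r, u)
          ∧ ∀ lam : Fin n → K, (∀ i : Fin d, ∑ j : Fin n, A i j * lam j = 0) →
            aeval (Sum.elim (fun i => X (Sum.inl i))
              (fun i => X (Sum.inr i) + C (lam i) * X (Sum.inl i))) F = F) := by
    intro F
    simp only [Submodule.mem_inf, mem_weightedHomogeneousSubmodule, Submodule.mem_iInf,
      LinearMap.mem_eqLocus, AlgHom.toLinearMap_apply, LinearMap.id_apply, Subtype.forall]
  -- the forward linear map
  set Φl : MvPolynomial (Fin d) K →ₗ[K] MvPolynomial (Fin n ⊕ Fin n) K :=
    (smap K n u) ∘ₗ (sigA' A).toLinearMap with hΦl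
  set Ψl : MvPolynomial (Fin n ⊕ Fin n) K →ₗ[K] MvPolynomial (Fin d) K :=
    (tauB' B).toLinearMap ∘ₗ (evm' (K := K) (n := n)).toLinearMap with hΨl
  have hΦapp : ∀ f, Φl f = smap K n u (sigA' A f) := fun f => rfl
  have hΨapp : ∀ F, Ψl F = tauB' B (evm' (K := K) (n := n) F) := fun F => rfl
  -- support bound for σ f under the PDE conditions
  have hsuppσ : ∀ f : MvPolynomial (Fin d) K,
      (∀ j : Fin n, (((∑ i, A i j • (pderiv i).toLinearMap) :
          Module.End K (MvPolynomial (Fin d) K)) ^ (u j + 1)) f = 0) →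
      ∀ j : Fin n, ∀ b ∈ (sigA' A f).support, b j < u j + 1 := by
    intro f hf j
    rw [← aux_iter_pderiv_zero_iff, ← aux_sigma_iter A j (u j + 1) f, hf j, map_zero]
  -- wt2 homogeneity of images of smap
  have hwt2smap : ∀ f : MvPolynomial (Fin d) K,
      (∀ j : Fin n, ∀ b ∈ (sigA' A f).support, b j < u j + 1) →
      (Φl f).IsWeightedHomogeneous
        (Sum.elim (fun i => Pi.single i 1) (fun i => Pi.single i 1) :
          Fin n ⊕ Fin n → Fin n → ℕ) u := by
    intro f hb
    rw [hΦapp, smap_repr]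
    apply IsWeightedHomogeneous.sum
    intro b hbs
    apply isWeightedHomogeneous_monomial
    rw [aux_weight2_formula]
    funext k
    rw [embu_apply_inl, embu_apply_inr]
    have := hb k b hbs
    omega
  -- full weighted homogeneity
  have hwtsmap : ∀ f : MvPolynomial (Fin d) K, f.IsHomogeneous r →
      (∀ j : Fin n, ∀ b ∈ (sigA' A f).support, b j < u j + 1) →
      (Φl f).IsWeightedHomogeneous
        (Sum.elim (fun i => ((0 : ℕ), Pi.single i 1)) (fun i => ((1 : ℕ), Pi.single i 1)))
        (r, u) := by
    intro f hf hb
    have hσh : (sigA' A f).IsWeightedHomogeneous (1 : Fin n → ℕ) r := by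
      apply aux_aeval_whomog (1 : Fin d → ℕ) (1 : Fin n → ℕ)
      · intro v
        have := aux_lin_whomog (K := K) (fun k => A v k)
        simpa using this
      · exact hf
    rw [hΦapp, smap_repr]
    apply IsWeightedHomogeneous.sum
    intro b hbs
    apply isWeightedHomogeneous_monomial
    rw [aux_weight_formula]
    have h1 : (∑ i, embu u b (Sum.inr i)) = r := by
      have hw := hσh (mem_support_iff.mp hbs)
      rw [aux_weight_one] at hw
      rw [← hw]
      apply Finset.sum_congr rfl
      intro i _
      rw [embu_apply_inr]
    have h2 : (fun k => embu u b (Sum.inl k) + embu u b (Sum.inr k)) = u := by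
      funext k
      rw [embu_apply_inl, embu_apply_inr]
      have := hb k b hbs
      omega
    rw [h1, h2]
  -- wt2 homogeneity from full weighted homogeneity
  have hwt2of : ∀ F : MvPolynomial (Fin n ⊕ Fin n) K,
      F.IsWeightedHomogeneous
        (Sum.elim (fun i => ((0 : ℕ), Pi.single i 1)) (fun i => ((1 : ℕ), Pi.single i 1)))
        (r, u) →
      F.IsWeightedHomogeneous
        (Sum.elim (fun i => Pi.single i 1) (fun i => Pi.single i 1) :
          Fin n ⊕ Fin n → Fin n → ℕ) u := by
    intro F hF m hm
    have h := hF hm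
    rw [aux_weight_formula] at h
    rw [aux_weight2_formula]
    exact congrArg Prod.snd h
  -- smap ∘ evm' = id on wt2-homogeneous polynomials
  have hse : ∀ F : MvPolynomial (Fin n ⊕ Fin n) K,
      F.IsWeightedHomogeneous
        (Sum.elim (fun i => Pi.single i 1) (fun i => Pi.single i 1) :
          Fin n ⊕ Fin n → Fin n → ℕ) u →
      smap K n u (evm' (K := K) (n := n) F) = F := by
    intro F hF
    apply smap_evm
    intro m hm i
    have h := hF (mem_support_iff.mp hm)
    rw [aux_weight2_formula] at h
    exact congrFun h i
  -- support bound of evm' F for wt2-homogeneous F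
  have hsuppev : ∀ F : MvPolynomial (Fin n ⊕ Fin n) K,
      F.IsWeightedHomogeneous
        (Sum.elim (fun i => Pi.single i 1) (fun i => Pi.single i 1) :
          Fin n ⊕ Fin n → Fin n → ℕ) u →
      ∀ j : Fin n, ∀ b ∈ (evm' (K := K) (n := n) F).support, b j < u j + 1 := by
    intro F hF j b hb
    have hcb := mem_support_iff.mp hb
    rw [evm_repr, MvPolynomial.coeff_sum] at hcb
    obtain ⟨m, hm, hne⟩ := Finset.exists_ne_zero_of_sum_ne_zero hcb
    rw [coeff_monomial] at hne
    have hrb : restr n m = b := by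
      by_contra hc
      rw [if_neg hc] at hne
      exact hne rfl
    have hbm : b j = m (Sum.inr j) := by
      rw [← hrb, restr, Finsupp.coe_equivFunOnFinite_symm]
    have h := hF (mem_support_iff.mp hm)
    rw [aux_weight2_formula] at h
    have := congrFun h j
    omega
  -- invariance of Φl f
  have hinvΦ : ∀ f : MvPolynomial (Fin d) K,
      (∀ j : Fin n, ∀ b ∈ (sigA' A f).support, b j < u j + 1) →
      ∀ lam : Fin n → K, (∀ i : Fin d, ∑ j : Fin n, A i j * lam j = 0) →
      aeval (Sum.elim (fun i => X (Sum.inl i))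
        (fun i => X (Sum.inr i) + C (lam i) * X (Sum.inl i))) (Φl f) = Φl f := by
    intro f hb lam hlam
    have hP2 : (Φl f).IsWeightedHomogeneous
        (Sum.elim (fun i => Pi.single i 1) (fun i => Pi.single i 1) :
          Fin n ⊕ Fin n → Fin n → ℕ) u := hwt2smap f hb
    have hev : evm' (K := K) (n := n) (Φl f) = sigA' A f := by
      rw [hΦapp, evm_smap]
    have hphiP : (aeval (Sum.elim (fun i => X (Sum.inl i))
        (fun i => X (Sum.inr i) + C (lam i) * X (Sum.inl i))) (Φl f)).IsWeightedHomogeneous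
        (Sum.elim (fun i => Pi.single i 1) (fun i => Pi.single i 1) :
          Fin n ⊕ Fin n → Fin n → ℕ) u := by
      apply aux_aeval_whomog
        (Sum.elim (fun i => Pi.single i 1) (fun i => Pi.single i 1) :
          Fin n ⊕ Fin n → Fin n → ℕ)
        (Sum.elim (fun i => Pi.single i 1) (fun i => Pi.single i 1) :
          Fin n ⊕ Fin n → Fin n → ℕ)
      · intro v
        rcases v with i | i
        · exact isWeightedHomogeneous_X K _ (Sum.inl i : Fin n ⊕ Fin n)
        · apply IsWeightedHomogeneous.add
          · exact isWeightedHomogeneous_X K _ (Sum.inr i : Fin n ⊕ Fin n)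
          · have h := (isWeightedHomogeneous_C
                (Sum.elim (fun i => Pi.single i 1) (fun i => Pi.single i 1) :
                  Fin n ⊕ Fin n → Fin n → ℕ) (lam i)).mul
                (isWeightedHomogeneous_X K _ (Sum.inl i : Fin n ⊕ Fin n))
            rw [zero_add] at h
            simpa using h
      · exact hP2
    have h3 := AlgHom.congr_fun (aux_evm_phi lam) (Φl f)
    rw [AlgHom.comp_apply, AlgHom.comp_apply, hev, aux_translate_sigma A lam hlam f] at h3
    calc aeval (Sum.elim (fun i => X (Sum.inl i))
          (fun i => X (Sum.inr i) + C (lam i) * X (Sum.inl i))) (Φl f)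
        = smap K n u (evm' (K := K) (n := n) (aeval (Sum.elim (fun i => X (Sum.inl i))
            (fun i => X (Sum.inr i) + C (lam i) * X (Sum.inl i))) (Φl f))) :=
          (hse _ hphiP).symm
      _ = smap K n u (sigA' A f) := by rw [h3]
      _ = Φl f := (hΦapp f).symm
  -- key: σ (τ (evm F)) = evm F for invariant F
  have hστ : ∀ F : MvPolynomial (Fin n ⊕ Fin n) K,
      (∀ lam : Fin n → K, (∀ i : Fin d, ∑ j : Fin n, A i j * lam j = 0) →
        aeval (Sum.elim (fun i => X (Sum.inl i))
          (fun i => X (Sum.inr i) + C (lam i) * X (Sum.inl i))) F = F) →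
      sigA' A (tauB' B (evm' (K := K) (n := n) F)) = evm' (K := K) (n := n) F := by
    intro F hFinv
    apply aux_sigma_tau A B hAB
    intro lam hlam
    have h3 := AlgHom.congr_fun (aux_evm_phi lam) F
    rw [AlgHom.comp_apply, AlgHom.comp_apply, hFinv lam hlam] at h3
    exact h3.symm
  -- forward map lands in RHS
  have hΦmem : ∀ f, f ∈ ((MvPolynomial.homogeneousSubmodule (Fin d) K r) ⊓
        ⨅ j : Fin n, LinearMap.ker ((((fun j => ∑ i, A i j • (pderiv i).toLinearMap) :
          Fin n → Module.End K (MvPolynomial (Fin d) K)) j) ^ (u j + 1))) →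
      Φl f ∈ ((MvPolynomial.weightedHomogeneousSubmodule K
          (Sum.elim (fun i => ((0 : ℕ), Pi.single i 1)) (fun i => ((1 : ℕ), Pi.single i 1)))
          (r, u)) ⊓
        ⨅ lam : {lam : Fin n → K // ∀ i : Fin d, ∑ j : Fin n, A i j * lam j = 0},
          LinearMap.eqLocus (((fun lam => aeval (Sum.elim (fun i => X (Sum.inl i))
            (fun i => X (Sum.inr i) + C (lam i) * X (Sum.inl i)))) :
              (Fin n → K) → (MvPolynomial (Fin n ⊕ Fin n) K →ₐ[K]
                MvPolynomial (Fin n ⊕ Fin n) K)) lam.1).toLinearMap LinearMap.id) := by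
    intro f hf
    obtain ⟨hf1, hf2⟩ := (hmemL f).mp hf
    have hb := hsuppσ f hf2
    apply (hmemR (Φl f)).mpr
    exact ⟨hwtsmap f hf1 hb, fun lam hlam => hinvΦ f hb lam hlam⟩
  -- backward map lands in LHS
  have hΨmem : ∀ F, F ∈ ((MvPolynomial.weightedHomogeneousSubmodule K
          (Sum.elim (fun i => ((0 : ℕ), Pi.single i 1)) (fun i => ((1 : ℕ), Pi.single i 1)))
          (r, u)) ⊓
        ⨅ lam : {lam : Fin n → K // ∀ i : Fin d, ∑ j : Fin n, A i j * lam j = 0},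
          LinearMap.eqLocus (((fun lam => aeval (Sum.elim (fun i => X (Sum.inl i))
            (fun i => X (Sum.inr i) + C (lam i) * X (Sum.inl i)))) :
              (Fin n → K) → (MvPolynomial (Fin n ⊕ Fin n) K →ₐ[K]
                MvPolynomial (Fin n ⊕ Fin n) K)) lam.1).toLinearMap LinearMap.id) →
      Ψl F ∈ ((MvPolynomial.homogeneousSubmodule (Fin d) K r) ⊓
        ⨅ j : Fin n, LinearMap.ker ((((fun j => ∑ i, A i j • (pderiv i).toLinearMap) :
          Fin n → Module.End K (MvPolynomial (Fin d) K)) j) ^ (u j + 1))) := by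
    intro F hF
    obtain ⟨hF1, hF2⟩ := (hmemR F).mp hF
    have hwt2F := hwt2of F hF1
    apply (hmemL (Ψl F)).mpr
    constructor
    · -- homogeneity of degree r
      have hevh : (evm' (K := K) (n := n) F).IsWeightedHomogeneous (1 : Fin n → ℕ) r := by
        rw [evm_repr]
        apply IsWeightedHomogeneous.sum
        intro m hm
        apply isWeightedHomogeneous_monomial
        rw [aux_weight_one]
        have h := hF1 (mem_support_iff.mp hm)
        rw [aux_weight_formula] at h
        have hfst := congrArg Prod.fst h
        simp only at hfst
        rw [← hfst]
        apply Finset.sum_congr rfl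
        intro i _
        rw [restr, Finsupp.coe_equivFunOnFinite_symm]
      show (tauB' B (evm' (K := K) (n := n) F)).IsHomogeneous r
      apply aux_aeval_whomog (1 : Fin n → ℕ) (1 : Fin d → ℕ)
      · intro v
        have := aux_lin_whomog (K := K) (fun i => B (Pi.single i 1) v)
        simpa using this
      · exact hevh
    · -- PDE system
      intro j
      have h5 := aux_sigma_iter A j (u j + 1) (Ψl F)
      have h6 : sigA' A (Ψl F) = evm' (K := K) (n := n) F := hστ F hF2
      have h7 : (((pderiv j).toLinearMap : Module.End K (MvPolynomial (Fin n) K)) ^ (u j + 1))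
          (evm' (K := K) (n := n) F) = 0 := by
        rw [aux_iter_pderiv_zero_iff]
        exact hsuppev F hwt2F j
      have h8 : sigA' A ((((∑ i, A i j • (pderiv i).toLinearMap) :
          Module.End K (MvPolynomial (Fin d) K)) ^ (u j + 1)) (Ψl F)) = 0 := by
        rw [h5, h6, h7]
      have h9 := congrArg (tauB' B) h8
      rw [aux_tau_sigma A B hAB, map_zero] at h9
      exact h9
  -- the two inverse identities
  have hΨΦ : ∀ f, Ψl (Φl f) = f := by
    intro f
    rw [hΨapp, hΦapp, evm_smap, aux_tau_sigma A B hAB]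
  have hΦΨ : ∀ F, F ∈ ((MvPolynomial.weightedHomogeneousSubmodule K
          (Sum.elim (fun i => ((0 : ℕ), Pi.single i 1)) (fun i => ((1 : ℕ), Pi.single i 1)))
          (r, u)) ⊓
        ⨅ lam : {lam : Fin n → K // ∀ i : Fin d, ∑ j : Fin n, A i j * lam j = 0},
          LinearMap.eqLocus (((fun lam => aeval (Sum.elim (fun i => X (Sum.inl i))
            (fun i => X (Sum.inr i) + C (lam i) * X (Sum.inl i)))) :
              (Fin n → K) → (MvPolynomial (Fin n ⊕ Fin n) K →ₐ[K]
                MvPolynomial (Fin n ⊕ Fin n) K)) lam.1).toLinearMap LinearMap.id) →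
      Φl (Ψl F) = F := by
    intro F hF
    obtain ⟨hF1, hF2⟩ := (hmemR F).mp hF
    rw [hΦapp, hΨapp, hστ F hF2]
    exact hse F (hwt2of F hF1)
  -- assemble the equivalence
  refine ⟨LinearEquiv.ofLinear (Φl.restrict hΦmem) (Ψl.restrict hΨmem) ?_ ?_⟩
  · apply LinearMap.ext
    intro F
    apply Subtype.ext
    show Φl (Ψl F.1) = F.1
    exact hΦΨ F.1 F.2
  · apply LinearMap.ext
    intro f
    apply Subtype.ext
    show Ψl (Φl f.1) = f.1
    exact hΨΦ f.1
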